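/- Let s > 0, let 0 < ε₀ < π, and let ε have the truncated Gaussian distribution on [-ε₀, ε₀], i.e. the law of ε has density x ↦ exp(−x²/(2s²)) / (√(2πs²)·erf(ε₀/(√2·s))) on [-ε₀, ε₀] with respect to Lebesgue measure, where erf(x) = (2/√π)·∫₀ˣ exp(−t²) dt. Set ζ = 2/(τ²·s²). Then for every g with 0 < g ≤ Gm satisfying (2/τ)·arccos(√(g/Gm)) ≤ ε₀, the probability that G(ε) ≤ g equals 1 − erf(√ζ·arccos(√(g/Gm))) / erf(ε₀/(√2·s)). -/

import Mathlib

open Real MeasureTheory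

/-- The cosine antenna gain with maximum gain `Gm` and beam-spread parameter `τ`. -/
noncomputable def gain (Gm τ θ : ℝ) : ℝ :=
  if |θ| ≤ Real.pi / τ then Gm * Real.cos (τ * θ / 2) ^ 2 else 0

/-- The error function `erf x = (2/√π) ∫₀ˣ exp (-t²) dt`. -/
noncomputable def erf (x : ℝ) : ℝ :=
  2 / Real.sqrt Real.pi * ∫ t in (0:ℝ)..x, Real.exp (-t ^ 2)

lemma erf_pos {x : ℝ} (hx : 0 < x) : 0 < erf x := by
  unfold erf
  apply mul_pos (by positivity)
  apply intervalIntegral.intervalIntegral_pos_of_pos_on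
  · exact (Real.continuous_exp.comp (by continuity)).intervalIntegrable _ _
  · intro t _; positivity
  · exact hx

lemma int_exp_sq (x : ℝ) : ∫ t in (0:ℝ)..x, Real.exp (-t ^ 2) = Real.sqrt Real.pi / 2 * erf x := by
  rw [erf]
  have h : Real.sqrt Real.pi ≠ 0 := by positivity
  field_simp

lemma gauss_sym (c : ℝ) : ∫ t in (-c)..c, Real.exp (-t ^ 2)
    = 2 * ∫ t in (0:ℝ)..c, Real.exp (-t ^ 2) := by
  have hi : ∀ u v : ℝ, IntervalIntegrable (fun t => Real.exp (-t ^ 2)) volume u v :=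
    fun u v => (Real.continuous_exp.comp (by continuity)).intervalIntegrable u v
  rw [← intervalIntegral.integral_add_adjacent_intervals (hi (-c) 0) (hi 0 c)]
  have h := intervalIntegral.integral_comp_neg (a := (0:ℝ)) (b := c)
    (f := fun t => Real.exp (-t ^ 2))
  simp only [neg_zero, neg_sq, neg_neg] at h
  rw [← h]
  ring

lemma gauss_integral (s : ℝ) (hs : 0 < s) (b : ℝ) :
    ∫ θ in (-b)..b, Real.exp (-θ ^ 2 / (2 * s ^ 2))
      = Real.sqrt 2 * s * Real.sqrt Real.pi * erf (b / (Real.sqrt 2 * s)) := by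
  have hc : Real.sqrt 2 * s ≠ 0 := by positivity
  have h1 : ∀ θ : ℝ, Real.exp (-θ ^ 2 / (2 * s ^ 2))
      = Real.exp (-(θ / (Real.sqrt 2 * s)) ^ 2) := by
    intro θ
    congr 1
    rw [div_pow, mul_pow, Real.sq_sqrt (by norm_num : (0:ℝ) ≤ 2)]
    ring
  simp_rw [h1]
  rw [intervalIntegral.integral_comp_div (f := fun t => Real.exp (-t ^ 2)) hc,
    neg_div, gauss_sym, int_exp_sq]
  rw [smul_eq_mul]
  ring

lemma gain_le_iff (Gm τ g : ℝ) (hGm : 0 < Gm) (hτ : 0 < τ) (hg : 0 < g) (hgGm : g ≤ Gm)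
    (θ : ℝ) :
    gain Gm τ θ ≤ g ↔ 2 / τ * Real.arccos (Real.sqrt (g / Gm)) ≤ |θ| := by
  set A := Real.arccos (Real.sqrt (g / Gm)) with hA
  have hr0 : 0 ≤ g / Gm := by positivity
  have hr1 : g / Gm ≤ 1 := (div_le_one hGm).2 hgGm
  have hsq1 : Real.sqrt (g / Gm) ≤ 1 := by
    rw [show (1:ℝ) = Real.sqrt 1 from (Real.sqrt_one).symm]
    exact Real.sqrt_le_sqrt hr1
  have hcosA : Real.cos A = Real.sqrt (g / Gm) :=
    Real.cos_arccos (le_trans (by norm_num) (Real.sqrt_nonneg _)) hsq1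
  have hA0 : 0 ≤ A := Real.arccos_nonneg _
  have hA2 : A ≤ Real.pi / 2 := Real.arccos_le_pi_div_two.2 (Real.sqrt_nonneg _)
  have hcos_eq : Real.cos (τ * θ / 2) = Real.cos (τ * |θ| / 2) := by
    rw [← Real.cos_abs (τ * θ / 2), abs_div, abs_mul, abs_of_pos hτ]
    norm_num
  constructor
  · intro h
    by_contra hlt
    push_neg at hlt
    have hθπ : |θ| ≤ Real.pi / τ := le_of_lt <|
      calc |θ| < 2 / τ * A := hlt
        _ ≤ 2 / τ * (Real.pi / 2) := mul_le_mul_of_nonneg_left hA2 (by positivity)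
        _ = Real.pi / τ := by field_simp
    rw [gain, if_pos hθπ] at h
    have h2A : τ * (2 / τ * A) = 2 * A := by field_simp
    have hlt2 : τ * |θ| / 2 < A := by
      have := mul_lt_mul_of_pos_left hlt hτ
      rw [h2A] at this
      linarith
    have hcoslt : Real.cos A < Real.cos (τ * |θ| / 2) :=
      Real.cos_lt_cos_of_nonneg_of_le_pi (by positivity)
        (le_trans hA2 (by linarith [Real.pi_pos])) hlt2
    rw [hcosA] at hcoslt
    have hc0 : 0 ≤ Real.cos (τ * |θ| / 2) :=
      le_trans (Real.sqrt_nonneg _) hcoslt.le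
    have : g / Gm < Real.cos (τ * |θ| / 2) ^ 2 := by
      have := Real.sq_sqrt hr0
      nlinarith [Real.sqrt_nonneg (g / Gm)]
    rw [hcos_eq] at h
    have : g < Gm * Real.cos (τ * |θ| / 2) ^ 2 := by
      rw [div_lt_iff₀ hGm] at this
      linarith [this]
    linarith
  · intro h
    rw [gain]
    by_cases hθπ : |θ| ≤ Real.pi / τ
    · rw [if_pos hθπ, hcos_eq]
      have h2A : τ * (2 / τ * A) = 2 * A := by field_simp
      have hle : A ≤ τ * |θ| / 2 := by
        have := mul_le_mul_of_nonneg_left h hτ.le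
        rw [h2A] at this
        linarith
      have hup : τ * |θ| / 2 ≤ Real.pi / 2 := by
        rw [le_div_iff₀ hτ] at hθπ
        nlinarith
      have hcosle : Real.cos (τ * |θ| / 2) ≤ Real.cos A :=
        Real.cos_le_cos_of_nonneg_of_le_pi hA0 (by linarith [Real.pi_pos]) hle
      have hnn : 0 ≤ τ * |θ| / 2 := by positivity
      have hc0 : 0 ≤ Real.cos (τ * |θ| / 2) :=
        Real.cos_nonneg_of_mem_Icc ⟨le_trans (by linarith [Real.pi_pos]) hnn, hup⟩
      rw [hcosA] at hcosle
      have hss := Real.sq_sqrt hr0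
      have hsq : Real.cos (τ * |θ| / 2) ^ 2 ≤ g / Gm := by nlinarith
      have hGmg : Gm * (g / Gm) = g := by field_simp
      nlinarith
    · rw [if_neg hθπ]; exact hg.le

theorem cdf_truncated_gaussian_error (Gm τ s ε₀ : ℝ) (hGm : 0 < Gm) (hτ : 1 ≤ τ)
    (hs : 0 < s) (hε₁ : 0 < ε₀) (hε₂ : ε₀ < Real.pi) :
    ∀ g : ℝ, 0 < g → g ≤ Gm →
      2 / τ * Real.arccos (Real.sqrt (g / Gm)) ≤ ε₀ →
      (∫ θ in {θ ∈ Set.Icc (-ε₀) ε₀ | gain Gm τ θ ≤ g},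
          Real.exp (-θ ^ 2 / (2 * s ^ 2)) /
            (Real.sqrt (2 * Real.pi * s ^ 2) * erf (ε₀ / (Real.sqrt 2 * s))))
        = 1 - erf (Real.sqrt (2 / (τ ^ 2 * s ^ 2)) * Real.arccos (Real.sqrt (g / Gm))) /
            erf (ε₀ / (Real.sqrt 2 * s)) := by
  intro g hg hgGm haε
  have hτ0 : 0 < τ := lt_of_lt_of_le one_pos hτ
  set A := Real.arccos (Real.sqrt (g / Gm)) with hAdef
  set a := 2 / τ * A with hadef
  have hA0 : 0 ≤ A := Real.arccos_nonneg _
  have ha0 : 0 ≤ a := by positivity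
  -- the set is Icc \ Ioo
  have hset : {θ ∈ Set.Icc (-ε₀) ε₀ | gain Gm τ θ ≤ g}
      = Set.Icc (-ε₀) ε₀ \ Set.Ioo (-a) a := by
    ext θ
    simp only [Set.mem_setOf_eq, Set.mem_diff, Set.mem_Icc, Set.mem_Ioo,
      gain_le_iff Gm τ g hGm hτ0 hg hgGm θ, ← hAdef, ← hadef]
    constructor
    · rintro ⟨h1, h2⟩
      refine ⟨h1, fun h3 => ?_⟩
      rcases h3 with ⟨h3, h4⟩
      have : |θ| < a := abs_lt.2 ⟨h3, h4⟩
      linarith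
    · rintro ⟨h1, h2⟩
      refine ⟨h1, ?_⟩
      by_contra h3
      push_neg at h3
      exact h2 (abs_lt.1 h3)
  rw [hset]
  -- argument identity
  have harg : a / (Real.sqrt 2 * s) = Real.sqrt (2 / (τ ^ 2 * s ^ 2)) * A := by
    have h1 : Real.sqrt (2 / (τ ^ 2 * s ^ 2)) = Real.sqrt 2 / (τ * s) := by
      rw [show 2 / (τ ^ 2 * s ^ 2) = (Real.sqrt 2 / (τ * s)) ^ 2 by
        rw [div_pow, Real.sq_sqrt (by norm_num : (0:ℝ) ≤ 2)]; ring,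
        Real.sqrt_sq (by positivity)]
    rw [h1, hadef]
    have h2 : Real.sqrt 2 ^ 2 = 2 := Real.sq_sqrt (by norm_num)
    field_simp
    linear_combination (-A) * h2
  rw [← harg]
  -- now the integral computation
  set C := Real.sqrt (2 * Real.pi * s ^ 2) * erf (ε₀ / (Real.sqrt 2 * s)) with hC
  have herf : 0 < erf (ε₀ / (Real.sqrt 2 * s)) := erf_pos (by positivity)
  have hsqrt : Real.sqrt (2 * Real.pi * s ^ 2) = Real.sqrt 2 * Real.sqrt Real.pi * s := by
    rw [show 2 * Real.pi * s ^ 2 = (Real.sqrt 2 * Real.sqrt Real.pi * s) ^ 2 by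
      rw [mul_pow, mul_pow, Real.sq_sqrt (by norm_num : (0:ℝ) ≤ 2),
        Real.sq_sqrt Real.pi_pos.le],
      Real.sqrt_sq (by positivity)]
  have hcont : Continuous fun θ : ℝ => Real.exp (-θ ^ 2 / (2 * s ^ 2)) / C :=
    (Real.continuous_exp.comp (by continuity)).div_const C
  have hint : IntegrableOn (fun θ : ℝ => Real.exp (-θ ^ 2 / (2 * s ^ 2)) / C)
      (Set.Icc (-ε₀) ε₀) volume := hcont.integrableOn_Icc
  have hsub : Set.Ioo (-a) a ⊆ Set.Icc (-ε₀) ε₀ :=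
    Set.Ioo_subset_Icc_self.trans (Set.Icc_subset_Icc (by linarith) haε)
  rw [integral_diff measurableSet_Ioo hint hsub]
  have hIcc : ∫ θ in Set.Icc (-ε₀) ε₀, Real.exp (-θ ^ 2 / (2 * s ^ 2)) / C
      = (Real.sqrt 2 * s * Real.sqrt Real.pi * erf (ε₀ / (Real.sqrt 2 * s))) / C := by
    rw [integral_div, MeasureTheory.integral_Icc_eq_integral_Ioc,
      ← intervalIntegral.integral_of_le (by linarith), gauss_integral s hs]
  have hIoo : ∫ θ in Set.Ioo (-a) a, Real.exp (-θ ^ 2 / (2 * s ^ 2)) / C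
      = (Real.sqrt 2 * s * Real.sqrt Real.pi * erf (a / (Real.sqrt 2 * s))) / C := by
    rw [integral_div, ← MeasureTheory.integral_Ioc_eq_integral_Ioo,
      ← intervalIntegral.integral_of_le (by linarith), gauss_integral s hs]
  rw [hIcc, hIoo, hC, hsqrt]
  have h2 : Real.sqrt 2 > 0 := by positivity
  have hπ : Real.sqrt Real.pi > 0 := by positivity
  field_simp
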